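/- Splitting degenerate eigenvalues: let N be a finite-dimensional subspace of L²(Ω) of dimension h ≥ 2 with a basis {f₁,…,f_h} of essentially bounded functions. Then there exists σ ∈ L^∞(Ω) (namely σ = f_j f_k for some j ≠ k) such that the self-adjoint operator G_σ : N → N defined by (G_σ f, g)_{L²} = −∫_Ω σ f g dx is not a scalar multiple of the identity, hence has at least two distinct eigenvalues. -/

import Mathlib

open MeasureTheory
open scoped RealInnerProductSpace ENNReal

/-- **Splitting degenerate eigenvalues** (key algebraic step of Theorem 4.2): let
`N ⊆ L²(Ω)` be an `h`-dimensional subspace, `h ≥ 2`, with an `L²(Ω)`-orthonormal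
basis `f_1, …, f_h` of essentially bounded functions such that `f_j f_k ≢ 0` for
`j ≠ k` (as holds for eigenfunctions, by unique continuation).  Then there is
`σ ∈ L^∞(Ω)` — namely `σ = f_j f_k` for some `j ≠ k` — such that the
self-adjoint operator `G_σ : N → N`, `(G_σ f, g)_{L²} = −∫_Ω σ f g`, represented
in the basis `{f_j}` by the symmetric matrix `M σ = (−∫_Ω σ f_j f_k)_{jk}`, is
not a scalar multiple of the identity, and hence has at least two distinct
eigenvalues. -/
theorem stmt_19 (E : Type*) [NormedAddCommGroup E] [MeasurableSpace E]
    (μ : MeasureTheory.Measure E) (Ω : Set E) (hΩ : MeasurableSet Ω)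
    (h : ℕ) (hh : 2 ≤ h)
    (f : Fin h → E → ℝ)
    (hbdd : ∀ j, MemLp (f j) ∞ (μ.restrict Ω))
    (honb : ∀ j k, ∫ x in Ω, f j x * f k x ∂μ = if j = k then (1 : ℝ) else 0)
    (hnz : ∀ j k, j ≠ k →
      ¬ (fun x => f j x * f k x) =ᵐ[μ.restrict Ω] (0 : E → ℝ)) :
    ∃ σ : E → ℝ, MemLp σ ∞ (μ.restrict Ω) ∧
      (∃ j k : Fin h, j ≠ k ∧ σ = fun x => f j x * f k x) ∧
      (¬ ∃ c : ℝ,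
        (Matrix.of fun j k : Fin h => -∫ x in Ω, σ x * f j x * f k x ∂μ) =
          c • (1 : Matrix (Fin h) (Fin h) ℝ)) ∧
      (∃ a b : ℝ, a ≠ b ∧
        Module.End.HasEigenvalue (Matrix.toLin'
          (Matrix.of fun j k : Fin h => -∫ x in Ω, σ x * f j x * f k x ∂μ)) a ∧
        Module.End.HasEigenvalue (Matrix.toLin'
          (Matrix.of fun j k : Fin h => -∫ x in Ω, σ x * f j x * f k x ∂μ)) b) := by
  set ν := μ.restrict Ω with hν
  have hmeas : ∀ j, AEStronglyMeasurable (f j) ν := fun j => (hbdd j).1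
  -- a.e. bounds
  have hC : ∀ j, ∃ C : ℝ, ∀ᵐ x ∂ν, |f j x| ≤ C := by
    intro j
    refine ⟨((eLpNormEssSup (f j) ν).toNNReal : ℝ), ?_⟩
    filter_upwards [ae_le_eLpNormEssSup (f := f j) (μ := ν)] with x hx
    have hlt : eLpNormEssSup (f j) ν < ⊤ := by
      have := (hbdd j).2
      rwa [eLpNorm_exponent_top] at this
    have : (‖f j x‖₊ : ℝ≥0∞) ≤ ((eLpNormEssSup (f j) ν).toNNReal : ℝ≥0∞) := by
      rwa [ENNReal.coe_toNNReal hlt.ne]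
    have := ENNReal.coe_le_coe.mp this
    simpa [Real.norm_eq_abs] using NNReal.coe_le_coe.mpr this
  -- each `f j * f j` is integrable (otherwise the integral would be 0 ≠ 1)
  have hint2 : ∀ j, Integrable (fun x => f j x * f j x) ν := by
    intro j
    by_contra hni
    have := honb j j
    rw [integral_undef hni] at this
    simp at this
  -- products are integrable
  have hintjk : ∀ j k, Integrable (fun x => f j x * f k x) ν := by
    intro j k
    refine Integrable.mono' (((hint2 j).add (hint2 k)).div_const 2)
      ((hmeas j).mul (hmeas k)) ?_
    filter_upwards with x
    have := sq_nonneg (|f j x| - |f k x|)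
    simp only [Real.norm_eq_abs, abs_mul, Pi.add_apply, Pi.div_apply]
    nlinarith [abs_nonneg (f j x), abs_nonneg (f k x), sq_abs (f j x), sq_abs (f k x)]
  obtain ⟨j0, hj0⟩ : ∃ j0 : Fin h, (j0 : ℕ) = 0 := ⟨⟨0, by omega⟩, rfl⟩
  obtain ⟨k0, hk0⟩ : ∃ k0 : Fin h, (k0 : ℕ) = 1 := ⟨⟨1, by omega⟩, rfl⟩
  have hjk : j0 ≠ k0 := by
    intro he; rw [he] at hj0; omega
  set g : E → ℝ := fun x => f j0 x * f k0 x with hg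
  -- σ = g is in L∞
  have hσbdd : MemLp g ∞ ν := by
    obtain ⟨C, hCb⟩ := hC j0
    obtain ⟨D, hDb⟩ := hC k0
    have hC0 : 0 ≤ C := by
      by_contra hc
      have : ∀ᵐ x ∂ν, False := by
        filter_upwards [hCb] with x hx
        exact absurd (le_trans (abs_nonneg _) hx) hc
      have h2 := hnz j0 k0 hjk
      exact h2 (by filter_upwards [this] with x hx; exact hx.elim)
    refine memLp_top_of_bound ((hmeas j0).mul (hmeas k0)) (C * D) ?_
    filter_upwards [hCb, hDb] with x h1 h2
    rw [Real.norm_eq_abs, abs_mul]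
    exact mul_le_mul h1 h2 (abs_nonneg _) hC0
  -- g * g is integrable
  have hintg2 : Integrable (fun x => g x * g x) ν := by
    obtain ⟨C, hCb⟩ := hC j0
    obtain ⟨D, hDb⟩ := hC k0
    refine Integrable.mono' (((hintjk j0 k0).abs.const_mul (|C| * |D|)))
      (((hmeas j0).mul (hmeas k0)).mul ((hmeas j0).mul (hmeas k0))) ?_
    filter_upwards [hCb, hDb] with x h1 h2
    simp only [Real.norm_eq_abs, abs_mul, hg]
    have h1' : |f j0 x| ≤ |C| := h1.trans (le_abs_self C)
    have h2' : |f k0 x| ≤ |D| := h2.trans (le_abs_self D)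
    have := mul_le_mul h1' h2' (abs_nonneg _) (abs_nonneg _)
    calc |f j0 x| * |f k0 x| * (|f j0 x| * |f k0 x|)
        ≤ (|C| * |D|) * (|f j0 x| * |f k0 x|) :=
          mul_le_mul_of_nonneg_right this (by positivity)
      _ = |C| * |D| * (|f j0 x| * |f k0 x|) := rfl
  -- ∫ g² > 0
  have hpos : 0 < ∫ x in Ω, g x * g x ∂μ := by
    rcases lt_or_eq_of_le (integral_nonneg (fun x => mul_self_nonneg (g x)) :
        0 ≤ ∫ x in Ω, g x * g x ∂μ) with hlt | heq
    · exact hlt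
    · exfalso
      have hz : (fun x => g x * g x) =ᵐ[ν] 0 := by
        rw [← integral_eq_zero_iff_of_nonneg (fun x => mul_self_nonneg (g x)) hintg2]
        exact heq.symm
      refine (hnz j0 k0 hjk) ?_
      filter_upwards [hz] with x hx
      show f j0 x * f k0 x = 0
      exact mul_self_eq_zero.mp hx
  refine ⟨g, hσbdd, ⟨j0, k0, hjk, rfl⟩, ?_⟩
  set M : Matrix (Fin h) (Fin h) ℝ :=
    Matrix.of fun j k : Fin h => -∫ x in Ω, g x * f j x * f k x ∂μ with hM
  have hMjk : M j0 k0 = -∫ x in Ω, g x * g x ∂μ := by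
    simp only [hM, Matrix.of_apply]
    congr 1
    apply integral_congr_ae
    filter_upwards with x
    simp [hg]; ring
  have hMjk_neg : M j0 k0 < 0 := by rw [hMjk]; linarith
  have hns : ¬ ∃ c : ℝ, M = c • (1 : Matrix (Fin h) (Fin h) ℝ) := by
    rintro ⟨c, hc⟩
    have := congrFun (congrFun hc j0) k0
    rw [Matrix.smul_apply, Matrix.one_apply_ne hjk, smul_zero] at this
    rw [this] at hMjk_neg
    exact lt_irrefl 0 hMjk_neg
  refine ⟨hns, ?_⟩
  -- M is symmetric (Hermitian over ℝ)
  have hH : M.IsHermitian := by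
    refine Matrix.IsHermitian.ext fun i j => ?_
    simp only [hM, Matrix.of_apply, RCLike.star_def, starRingEnd_apply, star_trivial, neg_inj]
    apply integral_congr_ae
    filter_upwards with x
    ring
  -- two distinct eigenvalues
  have heig : ∀ i : Fin h, Module.End.HasEigenvalue (Matrix.toLin' M) (hH.eigenvalues i) := by
    intro i
    apply Module.End.hasEigenvalue_of_hasEigenvector
      (x := (hH.eigenvectorBasis i : Fin h → ℝ))
    constructor
    · rw [Module.End.mem_eigenspace_iff]
      have hmv := hH.mulVec_eigenvectorBasis i
      ext t
      have ht := congrFun hmv t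
      simpa [Matrix.toLin'_apply] using ht
    · have := hH.eigenvectorBasis.orthonormal.ne_zero i
      intro hz
      apply this
      ext t
      exact congrFun hz t
  by_cases hall : ∀ i : Fin h, hH.eigenvalues i = hH.eigenvalues j0
  · exfalso
    apply hns
    refine ⟨hH.eigenvalues j0, ?_⟩
    have hdiag : Matrix.diagonal (RCLike.ofReal ∘ hH.eigenvalues) =
        (hH.eigenvalues j0) • (1 : Matrix (Fin h) (Fin h) ℝ) := by
      ext i j
      by_cases hij : i = j
      · subst hij
        simp [Matrix.diagonal_apply_eq, hall i]
      · simp [Matrix.diagonal_apply_ne _ hij, Matrix.one_apply_ne hij]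
    calc M = (hH.eigenvectorUnitary : Matrix (Fin h) (Fin h) ℝ) *
          Matrix.diagonal (RCLike.ofReal ∘ hH.eigenvalues) *
          (star (hH.eigenvectorUnitary : Matrix (Fin h) (Fin h) ℝ)) := hH.spectral_theorem
      _ = (hH.eigenvalues j0) • (1 : Matrix (Fin h) (Fin h) ℝ) := by
          rw [hdiag]
          rw [Matrix.mul_smul, Matrix.mul_one, Matrix.smul_mul]
          congr 1
          exact (Matrix.mem_unitaryGroup_iff).mp hH.eigenvectorUnitary.2
  · push_neg at hall
    obtain ⟨i, hi⟩ := hall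
    exact ⟨hH.eigenvalues i, hH.eigenvalues j0, hi, heig i, heig j0⟩
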